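/- Let (π, V) be a continuous representation of a Lie group G (with smooth exponential function) on an integral complete locally convex space V, and suppose the subspace V'_{C¹} of weak-* C¹-vectors of the dual representation separates the points of V. If v ∈ V is such that for every x in the Lie algebra 𝔤 the limit dπ(x)v := d/dt|_{t=0} π(exp tx)v exists, and the resulting map ω_v : 𝔤 → V, x ↦ dπ(x)v, is continuous, then ω_v is linear. -/

import Mathlib

/-- Lemma 1.4(b) of the paper: let `π` be a continuous representation of a Lie group `G`
(with exponential function `exp : 𝔤 → G`) on an integral complete locally convex space `V`
whose weak-* `C¹` functionals separate points. If for `v ∈ V` all infinitesimal generators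
`ω x = (d/dt)|₀ π(exp tx)v` exist and `ω : 𝔤 → V` is continuous, then `ω` is linear. -/
theorem stmt13
    {G : Type*} [TopologicalSpace G] [Group G] [IsTopologicalGroup G]
    {g : Type*} [AddCommGroup g] [Module ℝ g] [TopologicalSpace g]
      [IsTopologicalAddGroup g] [ContinuousSMul ℝ g] [LocallyConvexSpace ℝ g]
    {V : Type*} [AddCommGroup V] [Module ℝ V] [TopologicalSpace V]
      [IsTopologicalAddGroup V] [ContinuousSMul ℝ V] [LocallyConvexSpace ℝ V]
    (exp : g → G)
    (hexp_add : ∀ (x : g) (s t : ℝ), exp ((s + t) • x) = exp (s • x) * exp (t • x))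
    (hexp_zero : exp 0 = 1)
    (π : G → V →ₗ[ℝ] V)
    (hπ : ∀ a b : G, π (a * b) = (π a).comp (π b)) (hπ1 : π 1 = LinearMap.id)
    (hactcont : Continuous fun p : G × V => π p.1 p.2)
    -- `V` is integral complete
    (hIC : ∀ f : ℝ → V, Continuous f → ∃ w : V,
      ∀ α : V →L[ℝ] ℝ, α w = ∫ t in (0:ℝ)..1, α (f t))
    -- the weak-* `C¹` functionals for the dual representation
    (C1 : Set (V →L[ℝ] ℝ))
    (hC1 : C1 = {α : V →L[ℝ] ℝ | ∀ w : V, ∃ L : G → g → ℝ,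
      (∀ a : G, IsLinearMap ℝ (L a)) ∧
      Continuous (fun p : G × g => L p.1 p.2) ∧
      ∀ (a : G) (x : g),
        HasDerivAt (fun t : ℝ => α (π (a * exp (t • x)) w)) (L a x) 0})
    -- … separate the points of `V`
    (hsep : ∀ v : V, v ≠ 0 → ∃ α ∈ C1, α v ≠ 0)
    (v : V) (ω : g → V)
    (hω : ∀ x : g, Filter.Tendsto
      (fun t : ℝ => t⁻¹ • (π (exp (t • x)) v - v))
      (nhdsWithin 0 {(0:ℝ)}ᶜ) (nhds (ω x)))
    (hωcont : Continuous ω) :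
    IsLinearMap ℝ ω := by
  have key : ∀ α ∈ C1, IsLinearMap ℝ (fun x => α (ω x)) := by
    intro α hα
    rw [hC1] at hα
    obtain ⟨L, hLlin, -, hLderiv⟩ := hα v
    have heq : ∀ x, α (ω x) = L 1 x := by
      intro x
      have h1 : HasDerivAt (fun t : ℝ => α (π (1 * exp (t • x)) v)) (L 1 x) 0 :=
        hLderiv 1 x
      have h2 : HasDerivAt (fun t : ℝ => α (π (1 * exp (t • x)) v)) (α (ω x)) 0 := by
        rw [hasDerivAt_iff_tendsto_slope]
        have hc : Filter.Tendsto (fun t : ℝ => α (t⁻¹ • (π (exp (t • x)) v - v)))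
            (nhdsWithin 0 {(0:ℝ)}ᶜ) (nhds (α (ω x))) :=
          (α.continuous.tendsto _).comp (hω x)
        refine hc.congr' ?_
        filter_upwards [self_mem_nhdsWithin] with t ht
        simp only [slope, vsub_eq_sub, sub_zero, one_mul, map_smul, map_sub,
          smul_eq_mul, zero_smul, hexp_zero, hπ1, LinearMap.id_coe, id_eq]
      exact h2.unique h1
    refine ⟨fun x y => ?_, fun c x => ?_⟩
    · simp only [heq]; exact (hLlin 1).map_add x y
    · simp only [heq]; simpa using (hLlin 1).map_smul c x
  have key2 : ∀ u : V, (∀ α ∈ C1, α u = 0) → u = 0 := by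
    intro u hu
    by_contra h
    obtain ⟨α, hα, hne⟩ := hsep u h
    exact hne (hu α hα)
  refine ⟨fun x y => ?_, fun c x => ?_⟩
  · have h0 := key2 (ω (x + y) - (ω x + ω y)) (fun α hα => by
      have hl := key α hα
      simp [map_sub, map_add, hl.map_add x y])
    exact sub_eq_zero.mp h0
  · have h0 := key2 (ω (c • x) - c • ω x) (fun α hα => by
      have hl := key α hα
      simp [map_sub, map_smul, hl.map_smul c x])
    exact sub_eq_zero.mp h0
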